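/- arXiv:2102.06188 — 2 statements merged into one kernel-verified Lean document; each statement's English description precedes it below -/
import Mathlib

section
/- Let n ≥ 2, f ≥ 1, D' ⊆ D ⊆ {1,…,n−1}, and let λ ∈ ℤ^n satisfy (H_f). Let w ∈ S_n be D-admissible with w·λ'_D dominant, and let w' ∈ S_n be D'-admissible with w'·λ'_{D'} dominant. Then w·λ'_D ≤ w'·λ'_{D'}, and consequently supp(fθ − w'·λ'_{D'}) ⊆ supp(fθ − w·λ'_D). (Paper: Lemma 'inclusionP' in §2.2, for G = GL_n: the parabolic P(C_{P'}) is contained in P(C_P).) -/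
/-!
Setup (§2.2 of the paper, for `G = GL_n`): the symmetric group `S_n` acts on `ℚ^n` by
permuting coordinates, `(w • v) k = v (w⁻¹ k)`.  Coordinates are indexed by `Fin n`
(`0`-based), so the simple roots are `α i = e i − e (i+1)` for `i ∈ {0, …, n−2}`
(the paper's `α_{i+1}`), subsets of simple roots are subsets of
`{0, …, n−2} = Finset.range (n−1)`, and `θ = (n−1, n−2, …, 1, 0)`.
-/

namespace BHHMS

/-- The standard basis vector `e i` of `ℚ^n`. -/
def stde (n i : ℕ) : Fin n → ℚ := fun k => if (k : ℕ) = i then 1 else 0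

/-- The simple root `α i = e i − e (i+1)`, for `i ∈ {0, …, n−2}`. -/
def simpleRoot (n i : ℕ) : Fin n → ℚ := stde n i - stde n (i + 1)

/-- The action of `S_n` on `ℚ^n` permuting the coordinates: `(w • v) k = v (w⁻¹ k)`. -/
def permAct (n : ℕ) (w : Equiv.Perm (Fin n)) (v : Fin n → ℚ) : Fin n → ℚ :=
  fun k => v (w⁻¹ k)

/-- `v ≤ v'` iff `v' − v` is a `ℚ≥0`-linear combination of the simple roots. -/
def rootLE (n : ℕ) (v v' : Fin n → ℚ) : Prop :=
  ∃ c : ℕ → ℚ, (∀ i, 0 ≤ c i) ∧ v' - v = ∑ i ∈ Finset.range (n - 1), c i • simpleRoot n i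

/-- `v` is dominant iff `v 0 ≥ v 1 ≥ … ≥ v (n−1)`. -/
def Dominant (n : ℕ) (v : Fin n → ℚ) : Prop := ∀ i j : Fin n, i ≤ j → v j ≤ v i

/-- The adjacent transposition `s i = (i, i+1)` (junk value `1` if `i + 1 ≥ n`). -/
def adjSwap (n i : ℕ) : Equiv.Perm (Fin n) :=
  if h : i + 1 < n then Equiv.swap ⟨i, Nat.lt_of_succ_lt h⟩ ⟨i + 1, h⟩ else 1

/-- The subgroup `W_D ⊆ S_n` generated by the `s i` for `i ∈ D`. -/
def WD (n : ℕ) (D : Finset ℕ) : Subgroup (Equiv.Perm (Fin n)) :=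
  Subgroup.closure (adjSwap n '' ↑D)

/-- `Σ_{w ∈ W_D} w·v`. -/
noncomputable def WDsum (n : ℕ) (D : Finset ℕ) (v : Fin n → ℚ) : Fin n → ℚ :=
  ∑ᶠ w ∈ WD n D, permAct n w v

/-- The `W_D`-average `λ'_D = |W_D|⁻¹ Σ_{w ∈ W_D} w·λ`. -/
noncomputable def avg (n : ℕ) (D : Finset ℕ) (v : Fin n → ℚ) : Fin n → ℚ :=
  ((Nat.card ↥(WD n D) : ℚ))⁻¹ • WDsum n D v

/-- For `v` of coordinate sum `0`, writing `v = Σ_i c_i • α_i` one has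
`c_i = v 0 + ⋯ + v i`; then `supp v = {i : c_i ≠ 0}`. -/
def suppOf (n : ℕ) (v : Fin n → ℚ) : Finset ℕ :=
  (Finset.range (n - 1)).filter fun i => (∑ k : Fin n, if (k : ℕ) ≤ i then v k else 0) ≠ 0

/-- `w` is `D`-admissible iff `w (i+1) = w i + 1` for every `i ∈ D`. -/
def IsAdmissible (n : ℕ) (D : Finset ℕ) (w : Equiv.Perm (Fin n)) : Prop :=
  ∀ i ∈ D, ∀ h : i + 1 < n,
    ((w ⟨i + 1, h⟩ : Fin n) : ℕ) = ((w ⟨i, Nat.lt_of_succ_lt h⟩ : Fin n) : ℕ) + 1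

/-- The image `w(D) = {w i : i ∈ D}` as a subset of `ℕ`. -/
def permImage (n : ℕ) (w : Equiv.Perm (Fin n)) (D : Finset ℕ) : Finset ℕ :=
  D.image fun i => if h : i < n then ((w ⟨i, h⟩ : Fin n) : ℕ) else i

/-- `θ = (n−1, n−2, …, 1, 0)`. -/
def theta (n : ℕ) : Fin n → ℚ := fun k => (n : ℚ) - 1 - ((k : ℕ) : ℚ)

/-- A vector of `ℤ^n` seen in `ℚ^n`. -/
def ratVec (n : ℕ) (lam : Fin n → ℤ) : Fin n → ℚ := fun k => ((lam k : ℤ) : ℚ)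

/-- `λ ∈ ℤ^n` satisfies `(H_f)` iff `σ·λ ≤ fθ` for every `σ ∈ S_n`. -/
def SatisfiesHf (n f : ℕ) (lam : Fin n → ℤ) : Prop :=
  ∀ σ : Equiv.Perm (Fin n), rootLE n (permAct n σ (ratVec n lam)) ((f : ℚ) • theta n)

/-! ### Auxiliary machinery for the proof of `statement4` -/

section Aux

variable {n : ℕ}

/-- The partial sum `v 0 + ⋯ + v i` (the coefficient of `α_i`). -/
def Pp (n : ℕ) (i : ℕ) (v : Fin n → ℚ) : ℚ :=
  ∑ k : Fin n, if (k : ℕ) ≤ i then v k else 0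

/-- The total coordinate sum. -/
def Sm (n : ℕ) (v : Fin n → ℚ) : ℚ := ∑ k : Fin n, v k

lemma Pp_sub (i : ℕ) (u v : Fin n → ℚ) : Pp n i (u - v) = Pp n i u - Pp n i v := by
  unfold Pp
  rw [← Finset.sum_sub_distrib]
  refine Finset.sum_congr rfl fun k _ => ?_
  split_ifs <;> simp

lemma Pp_smul (i : ℕ) (c : ℚ) (v : Fin n → ℚ) : Pp n i (c • v) = c * Pp n i v := by
  unfold Pp
  rw [Finset.mul_sum]
  refine Finset.sum_congr rfl fun k _ => ?_
  split_ifs <;> simp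

lemma Pp_sum (i : ℕ) {ι : Type*} (s : Finset ι) (F : ι → Fin n → ℚ) :
    Pp n i (∑ x ∈ s, F x) = ∑ x ∈ s, Pp n i (F x) := by
  unfold Pp
  rw [Finset.sum_comm]
  refine Finset.sum_congr rfl fun k _ => ?_
  split_ifs <;> simp [Finset.sum_apply]

lemma Sm_sub (u v : Fin n → ℚ) : Sm n (u - v) = Sm n u - Sm n v := by
  simp [Sm, Finset.sum_sub_distrib]

lemma Sm_smul (c : ℚ) (v : Fin n → ℚ) : Sm n (c • v) = c * Sm n v := by
  simp [Sm, Finset.mul_sum]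

lemma Sm_sum {ι : Type*} (s : Finset ι) (F : ι → Fin n → ℚ) :
    Sm n (∑ x ∈ s, F x) = ∑ x ∈ s, Sm n (F x) := by
  unfold Sm
  simp only [Finset.sum_apply]
  exact Finset.sum_comm

lemma permAct_mul (σ τ : Equiv.Perm (Fin n)) (v : Fin n → ℚ) :
    permAct n σ (permAct n τ v) = permAct n (σ * τ) v := by
  funext k
  simp [permAct, mul_inv_rev]

lemma permAct_one (v : Fin n → ℚ) : permAct n 1 v = v := rfl

lemma permAct_smul (σ : Equiv.Perm (Fin n)) (c : ℚ) (v : Fin n → ℚ) :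
    permAct n σ (c • v) = c • permAct n σ v := rfl

lemma permAct_sum (σ : Equiv.Perm (Fin n)) {ι : Type*} (s : Finset ι) (F : ι → Fin n → ℚ) :
    permAct n σ (∑ x ∈ s, F x) = ∑ x ∈ s, permAct n σ (F x) := by
  funext k
  simp [permAct, Finset.sum_apply]

lemma Sm_permAct (σ : Equiv.Perm (Fin n)) (v : Fin n → ℚ) : Sm n (permAct n σ v) = Sm n v :=
  Equiv.sum_comp σ⁻¹ v

lemma Pp_perm_le_of_dominant {μ : Fin n → ℚ} (hμ : Dominant n μ) (σ : Equiv.Perm (Fin n))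
    (i : ℕ) : Pp n i (permAct n σ μ) ≤ Pp n i μ := by
  have hm : Monovary (fun k : Fin n => if (k : ℕ) ≤ i then (1 : ℚ) else 0) μ := by
    intro a b hab
    have hba : b < a := by
      by_contra h
      push_neg at h
      exact absurd (hμ a b h) (not_le.mpr hab)
    by_cases ha : (a : ℕ) ≤ i
    · have hb : (b : ℕ) ≤ i := le_trans (le_of_lt hba) ha
      simp [ha, hb]
    · simp only [ha, if_false]
      split_ifs <;> norm_num
  have h2 := hm.sum_smul_comp_perm_le_sum_smul (σ := σ⁻¹)
  simpa [Pp, permAct, smul_eq_mul, ite_mul] using h2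

/-- The underlying finset of `W_D`. -/
noncomputable def grp (n : ℕ) (D : Finset ℕ) : Finset (Equiv.Perm (Fin n)) :=
  (Set.toFinite (WD n D : Set (Equiv.Perm (Fin n)))).toFinset

lemma mem_grp {D : Finset ℕ} {σ : Equiv.Perm (Fin n)} : σ ∈ grp n D ↔ σ ∈ WD n D := by
  rw [grp, Set.Finite.mem_toFinset, SetLike.mem_coe]

lemma one_mem_grp (D : Finset ℕ) : (1 : Equiv.Perm (Fin n)) ∈ grp n D :=
  mem_grp.mpr (WD n D).one_mem

lemma grp_card_pos (D : Finset ℕ) : 0 < (grp n D).card :=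
  Finset.card_pos.mpr ⟨1, one_mem_grp D⟩

lemma grp_card_ne (D : Finset ℕ) : ((grp n D).card : ℚ) ≠ 0 :=
  Nat.cast_ne_zero.mpr (grp_card_pos D).ne'

lemma WDsum_eq (D : Finset ℕ) (v : Fin n → ℚ) :
    WDsum n D v = ∑ σ ∈ grp n D, permAct n σ v := by
  rw [WDsum]
  exact finsum_mem_eq_finite_toFinset_sum _ (Set.toFinite (WD n D : Set (Equiv.Perm (Fin n))))

lemma card_WD_eq (D : Finset ℕ) : Nat.card ↥(WD n D) = (grp n D).card := by
  have h1 : Nat.card ↥(WD n D) = Nat.card (WD n D : Set (Equiv.Perm (Fin n))) := rfl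
  rw [h1, Nat.card_coe_set_eq, Set.ncard_eq_toFinset_card _
    (Set.toFinite (WD n D : Set (Equiv.Perm (Fin n))))]
  rfl

lemma avg_eq (D : Finset ℕ) (v : Fin n → ℚ) :
    avg n D v = (((grp n D).card : ℚ))⁻¹ • ∑ σ ∈ grp n D, permAct n σ v := by
  rw [avg, WDsum_eq, card_WD_eq]

lemma sum_grp_perm {D : Finset ℕ} {τ : Equiv.Perm (Fin n)} (hτ : τ ∈ WD n D) (v : Fin n → ℚ) :
    ∑ σ ∈ grp n D, permAct n σ (permAct n τ v) = ∑ σ ∈ grp n D, permAct n σ v := by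
  refine Finset.sum_equiv (Equiv.mulRight τ) ?_ ?_
  · intro σ
    simp only [Equiv.coe_mulRight, mem_grp]
    exact (mul_mem_cancel_right hτ).symm
  · intro σ _
    simp [Equiv.coe_mulRight, permAct_mul]

lemma avg_perm {D : Finset ℕ} {τ : Equiv.Perm (Fin n)} (hτ : τ ∈ WD n D) (v : Fin n → ℚ) :
    avg n D (permAct n τ v) = avg n D v := by
  rw [avg_eq, avg_eq, sum_grp_perm hτ]

lemma avg_smul (D : Finset ℕ) (c : ℚ) (v : Fin n → ℚ) :
    avg n D (c • v) = c • avg n D v := by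
  rw [avg_eq, avg_eq]
  simp only [permAct_smul, ← Finset.smul_sum]
  rw [smul_comm]

lemma avg_sum (D : Finset ℕ) {ι : Type*} (s : Finset ι) (F : ι → Fin n → ℚ) :
    avg n D (∑ x ∈ s, F x) = ∑ x ∈ s, avg n D (F x) := by
  simp only [avg_eq, permAct_sum]
  rw [Finset.sum_comm, Finset.smul_sum]

lemma avg_avg {D D' : Finset ℕ} (h : WD n D' ≤ WD n D) (v : Fin n → ℚ) :
    avg n D (avg n D' v) = avg n D v := by
  rw [avg_eq D' v, avg_smul, avg_sum]
  rw [Finset.sum_congr rfl fun τ hτ => avg_perm (h (mem_grp.mp hτ)) v]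
  rw [Finset.sum_const, ← Nat.cast_smul_eq_nsmul ℚ, smul_smul,
    inv_mul_cancel₀ (grp_card_ne D'), one_smul]

lemma permAct_avg (D : Finset ℕ) (w : Equiv.Perm (Fin n)) (v : Fin n → ℚ) :
    permAct n w (avg n D v)
      = (((grp n D).card : ℚ))⁻¹ • ∑ σ ∈ grp n D, permAct n (w * σ) v := by
  rw [avg_eq, permAct_smul, permAct_sum]
  simp only [permAct_mul]

lemma Sm_avg (D : Finset ℕ) (v : Fin n → ℚ) : Sm n (avg n D v) = Sm n v := by
  rw [avg_eq, Sm_smul, Sm_sum]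
  rw [Finset.sum_congr rfl fun σ _ => Sm_permAct σ v, Finset.sum_const, nsmul_eq_mul,
    ← mul_assoc, inv_mul_cancel₀ (grp_card_ne D), one_mul]

lemma Pp_permAct_avg_le {D : Finset ℕ} (w : Equiv.Perm (Fin n)) (v : Fin n → ℚ) {t : ℚ}
    (i : ℕ) (h : ∀ σ ∈ grp n D, Pp n i (permAct n (w * σ) v) ≤ t) :
    Pp n i (permAct n w (avg n D v)) ≤ t := by
  rw [permAct_avg, Pp_smul, Pp_sum]
  have hsum : ∑ σ ∈ grp n D, Pp n i (permAct n (w * σ) v) ≤ (grp n D).card • t :=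
    Finset.sum_le_card_nsmul _ _ _ h
  rw [nsmul_eq_mul] at hsum
  calc (((grp n D).card : ℚ))⁻¹ * ∑ σ ∈ grp n D, Pp n i (permAct n (w * σ) v)
      ≤ (((grp n D).card : ℚ))⁻¹ * ((grp n D).card * t) := by
        have : (0:ℚ) ≤ (((grp n D).card : ℚ))⁻¹ := by positivity
        exact mul_le_mul_of_nonneg_left hsum this
    _ = t := by
        rw [← mul_assoc, inv_mul_cancel₀ (grp_card_ne D), one_mul]

lemma Pp_stde (i a : ℕ) : Pp n i (stde n a) = if a ≤ i ∧ a < n then 1 else 0 := by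
  unfold Pp stde
  rcases Nat.lt_or_ge a n with h | h
  · rw [Finset.sum_eq_single (⟨a, h⟩ : Fin n)]
    · simp [h]
    · intro b _ hb
      have : (b : ℕ) ≠ a := fun hc => hb (Fin.ext hc)
      simp [this]
    · exact fun hmem => absurd (Finset.mem_univ _) hmem
  · have hk : ∀ k : Fin n, (k : ℕ) ≠ a := fun k hc => absurd (hc ▸ k.isLt) (not_lt.mpr h)
    have : ¬ (a ≤ i ∧ a < n) := fun hc => absurd hc.2 (not_lt.mpr h)
    simp [hk, this]

lemma Pp_simpleRoot (i j : ℕ) (hj : j < n - 1) :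
    Pp n i (simpleRoot n j) = if i = j then 1 else 0 := by
  rw [simpleRoot, Pp_sub, Pp_stde, Pp_stde]
  have h1 : j < n := by omega
  have h2 : j + 1 < n := by omega
  rcases Nat.lt_trichotomy i j with h | h | h
  · rw [if_neg (by omega), if_neg (by omega), if_neg (by omega)]
    norm_num
  · subst h
    rw [if_pos ⟨le_refl i, h1⟩, if_neg (by omega), if_pos rfl]
    norm_num
  · rw [if_pos (by omega), if_pos (by omega), if_neg (by omega)]
    norm_num

lemma Sm_stde (a : ℕ) : Sm n (stde n a) = if a < n then 1 else 0 := by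
  unfold Sm stde
  rcases Nat.lt_or_ge a n with h | h
  · rw [Finset.sum_eq_single (⟨a, h⟩ : Fin n)]
    · simp [h]
    · intro b _ hb
      have : (b : ℕ) ≠ a := fun hc => hb (Fin.ext hc)
      simp [this]
    · exact fun hmem => absurd (Finset.mem_univ _) hmem
  · have hk : ∀ k : Fin n, (k : ℕ) ≠ a := fun k hc => absurd (hc ▸ k.isLt) (not_lt.mpr h)
    simp [hk, not_lt.mpr h]

lemma Sm_simpleRoot (j : ℕ) (hj : j < n - 1) : Sm n (simpleRoot n j) = 0 := by
  have hs : Sm n (simpleRoot n j) = Sm n (stde n j) - Sm n (stde n (j + 1)) := Sm_sub _ _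
  rw [hs, Sm_stde, Sm_stde, if_pos (by omega : j < n), if_pos (by omega : j + 1 < n)]
  ring

lemma Pp_le_of_rootLE {v v' : Fin n → ℚ} (h : rootLE n v v') {i : ℕ} (hi : i < n - 1) :
    Pp n i v ≤ Pp n i v' := by
  obtain ⟨c, hc, he⟩ := h
  have key : Pp n i v' - Pp n i v = c i := by
    rw [← Pp_sub, he, Pp_sum]
    rw [Finset.sum_congr rfl fun j hj => by
      rw [Pp_smul, Pp_simpleRoot i j (Finset.mem_range.mp hj)]]
    simp only [mul_ite, mul_one, mul_zero]
    rw [Finset.sum_ite_eq, if_pos (Finset.mem_range.mpr hi)]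
  linarith [hc i]

lemma Sm_eq_of_rootLE {v v' : Fin n → ℚ} (h : rootLE n v v') : Sm n v = Sm n v' := by
  obtain ⟨c, hc, he⟩ := h
  have key : Sm n v' - Sm n v = 0 := by
    rw [← Sm_sub, he, Sm_sum]
    rw [Finset.sum_congr rfl fun j hj => by
      rw [Sm_smul, Sm_simpleRoot j (Finset.mem_range.mp hj), mul_zero]]
    simp
  linarith

lemma Pp_zero_eval (d : Fin n → ℚ) (k : Fin n) (hk : (k : ℕ) = 0) : Pp n 0 d = d k := by
  rw [Pp, Finset.sum_eq_single k]
  · simp [hk]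
  · intro b _ hb
    have : ¬ ((b : ℕ) ≤ 0) := fun hle => hb (Fin.ext (by omega))
    simp [this]
  · exact fun hmem => absurd (Finset.mem_univ _) hmem

lemma Pp_step (d : Fin n → ℚ) (k : Fin n) (hk : 1 ≤ (k : ℕ)) :
    Pp n (k : ℕ) d = Pp n ((k : ℕ) - 1) d + d k := by
  have hterm : ∀ b : Fin n,
      (if (b : ℕ) ≤ (k : ℕ) then d b else 0)
        = (if (b : ℕ) ≤ (k : ℕ) - 1 then d b else 0) + (if b = k then d b else 0) := by
    intro b
    by_cases hbk : b = k
    · subst hbk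
      simp [(show ¬ ((b : ℕ) ≤ (b : ℕ) - 1) by omega)]
    · have hne : (b : ℕ) ≠ (k : ℕ) := fun hc => hbk (Fin.ext hc)
      simp only [hbk, if_false, add_zero]
      exact if_congr (by omega) rfl rfl
  rw [Pp, Pp, Finset.sum_congr rfl fun b _ => hterm b, Finset.sum_add_distrib,
    Finset.sum_ite_eq' Finset.univ k d, if_pos (Finset.mem_univ k)]

lemma Pp_top (m : ℕ) (hm : n - 1 ≤ m) (v : Fin n → ℚ) : Pp n m v = Sm n v := by
  refine Finset.sum_congr rfl fun k _ => ?_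
  have := k.isLt
  exact if_pos (by omega)

lemma rootLE_of_Pp (hn : 2 ≤ n) {v v' : Fin n → ℚ}
    (h : ∀ i, i < n - 1 → Pp n i v ≤ Pp n i v') (hs : Sm n v = Sm n v') :
    rootLE n v v' := by
  classical
  set d : Fin n → ℚ := v' - v with hd
  have hd0 : Sm n d = 0 := by rw [hd, Sm_sub, hs, sub_self]
  refine ⟨fun i => if i < n - 1 then Pp n i d else 0, ?_, ?_⟩
  · intro i
    show (0:ℚ) ≤ if i < n - 1 then Pp n i d else 0
    split_ifs with hi
    · rw [hd, Pp_sub]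
      linarith [h i hi]
    · exact le_refl 0
  · show v' - v = ∑ j ∈ Finset.range (n - 1), (if j < n - 1 then Pp n j d else 0) • simpleRoot n j
    funext k
    rw [Finset.sum_apply]
    have hterm : ∀ j ∈ Finset.range (n - 1),
        ((if j < n - 1 then Pp n j d else 0) • simpleRoot n j) k
          = (if (k : ℕ) = j then Pp n j d else 0) - (if (k : ℕ) = j + 1 then Pp n j d else 0) := by
      intro j hj
      have hj' : j < n - 1 := Finset.mem_range.mp hj
      simp only [if_pos hj', Pi.smul_apply, smul_eq_mul, simpleRoot, Pi.sub_apply, stde]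
      split_ifs <;> ring
    rw [Finset.sum_congr rfl hterm, Finset.sum_sub_distrib]
    have hfst : ∑ j ∈ Finset.range (n - 1), (if (k : ℕ) = j then Pp n j d else 0)
        = if (k : ℕ) ∈ Finset.range (n - 1) then Pp n (k : ℕ) d else 0 :=
      Finset.sum_ite_eq _ _ _
    rw [hfst]
    have hklt := k.isLt
    rcases Nat.eq_zero_or_pos (k : ℕ) with hk0 | hk1
    · have hsnd : ∑ j ∈ Finset.range (n - 1), (if (k : ℕ) = j + 1 then Pp n j d else 0) = 0 := by
        refine Finset.sum_eq_zero fun j _ => if_neg (by omega)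
      rw [hsnd, if_pos (Finset.mem_range.mpr (by omega))]
      rw [hk0, Pp_zero_eval d k hk0, sub_zero, hd]
    · have hsnd : ∑ j ∈ Finset.range (n - 1), (if (k : ℕ) = j + 1 then Pp n j d else 0)
          = Pp n ((k : ℕ) - 1) d := by
        rw [Finset.sum_eq_single_of_mem ((k : ℕ) - 1)
          (Finset.mem_range.mpr (by omega))]
        · rw [if_pos (by omega)]
        · intro j _ hjne
          exact if_neg (by omega)
      rw [hsnd]
      rcases Nat.lt_or_ge (k : ℕ) (n - 1) with hlt | hge
      · rw [if_pos (Finset.mem_range.mpr hlt)]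
        have := Pp_step d k hk1
        have : d k = Pp n (k : ℕ) d - Pp n ((k : ℕ) - 1) d := by linarith [Pp_step d k hk1]
        rw [hd] at this ⊢
        simp only [Pi.sub_apply] at this ⊢
        linarith
      · have hktop : (k : ℕ) = n - 1 := by omega
        rw [if_neg (by simp [Finset.mem_range]; omega)]
        have hstep := Pp_step d k hk1
        have htop : Pp n (k : ℕ) d = Sm n d := Pp_top _ (by omega) d
        have : d k = 0 - Pp n ((k : ℕ) - 1) d := by
          rw [htop, hd0] at hstep; linarith
        rw [hd] at this ⊢
        simp only [Pi.sub_apply] at this ⊢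
        linarith

end Aux

/-- Lemma `inclusionP`, §2.2, for `G = GL_n`.  If `D' ⊆ D`, `w` is
`D`-admissible with `w·λ'_D` dominant and `w'` is `D'`-admissible with `w'·λ'_{D'}`
dominant, then `w·λ'_D ≤ w'·λ'_{D'}` and
`supp (fθ − w'·λ'_{D'}) ⊆ supp (fθ − w·λ'_D)`. -/
theorem statement4 (n f : ℕ) (hn : 2 ≤ n) (hf : 1 ≤ f) (D D' : Finset ℕ)
    (hD : D ⊆ Finset.range (n - 1)) (hD' : D' ⊆ D)
    (lam : Fin n → ℤ) (hlam : SatisfiesHf n f lam)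
    (w : Equiv.Perm (Fin n)) (hw : IsAdmissible n D w)
    (hdomw : Dominant n (permAct n w (avg n D (ratVec n lam))))
    (w' : Equiv.Perm (Fin n)) (hw' : IsAdmissible n D' w')
    (hdomw' : Dominant n (permAct n w' (avg n D' (ratVec n lam)))) :
    rootLE n (permAct n w (avg n D (ratVec n lam))) (permAct n w' (avg n D' (ratVec n lam))) ∧
    suppOf n ((f : ℚ) • theta n - permAct n w' (avg n D' (ratVec n lam)))
      ⊆ suppOf n ((f : ℚ) • theta n - permAct n w (avg n D (ratVec n lam))) := by
  classical
  set lamQ := ratVec n lam with hlamQ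
  set Th := (f : ℚ) • theta n with hTh
  have hWle : WD n D' ≤ WD n D :=
    Subgroup.closure_mono (Set.image_mono (Finset.coe_subset.mpr hD'))
  set A := permAct n w (avg n D lamQ) with hA
  set B := permAct n w' (avg n D' lamQ) with hB
  have hSmA : Sm n A = Sm n lamQ := by rw [hA, Sm_permAct, Sm_avg]
  have hSmB : Sm n B = Sm n lamQ := by rw [hB, Sm_permAct, Sm_avg]
  have hBT : ∀ i, i < n - 1 → Pp n i B ≤ Pp n i Th := by
    intro i hi
    rw [hB]
    exact Pp_permAct_avg_le w' lamQ i fun σ _ => Pp_le_of_rootLE (hlam (w' * σ)) hi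
  have hAB : ∀ i, i < n - 1 → Pp n i A ≤ Pp n i B := by
    intro i hi
    rw [hA, ← avg_avg hWle lamQ]
    refine Pp_permAct_avg_le w _ i fun σ _ => ?_
    have hrw : permAct n (w * σ) (avg n D' lamQ) = permAct n (w * σ * w'⁻¹) B := by
      rw [hB, permAct_mul]
      congr 1
      group
    rw [hrw]
    exact Pp_perm_le_of_dominant hdomw' _ i
  have part1 : rootLE n A B := rootLE_of_Pp hn hAB (by rw [hSmA, hSmB])
  refine ⟨part1, ?_⟩
  intro i hi
  obtain ⟨hiR, hPne⟩ := Finset.mem_filter.mp hi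
  have hiL : i < n - 1 := Finset.mem_range.mp hiR
  have h1 : Pp n i (Th - B) ≠ 0 := hPne
  have hBle := hBT i hiL
  have hABle := hAB i hiL
  refine Finset.mem_filter.mpr ⟨hiR, ?_⟩
  show Pp n i (Th - A) ≠ 0
  rw [Pp_sub] at h1 ⊢
  have hpos : 0 < Pp n i Th - Pp n i B := lt_of_le_of_ne (by linarith) (Ne.symm h1)
  have : (0:ℚ) < Pp n i Th - Pp n i A := by linarith
  exact ne_of_gt this

end BHHMS
end

section
/- Let n ≥ 2, f ≥ 1, D ⊆ {1,…,n−1}, and let λ ∈ ℤ^n satisfy (H_f). Suppose w ∈ S_n is D-admissible with w·λ'_D dominant and supp(fθ − w·λ'_D) ⊆ w(D). Then w is the unique D-admissible permutation w' ∈ S_n such that w'·λ'_D is dominant. (Paper: Lemma 'single' in §2.2, for G = GL_n: if P(C_P) = {}^w P then W(C_P) is a singleton.) -/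
/-!
Setup (§2.2 of the paper, for `G = GL_n`): the symmetric group `S_n` acts on `ℚ^n` by
permuting coordinates, `(w • v) k = v (w⁻¹ k)`.  Coordinates are indexed by `Fin n`
(`0`-based), so the simple roots are `α i = e i − e (i+1)` for `i ∈ {0, …, n−2}`
(the paper's `α_{i+1}`), subsets of simple roots are subsets of
`{0, …, n−2} = Finset.range (n−1)`, and `θ = (n−1, n−2, …, 1, 0)`.
-/

namespace BHHMS

/-- partial sum over first `m` coordinates -/
def psum (n : ℕ) (x : Fin n → ℚ) (m : ℕ) : ℚ := ∑ k : Fin n, if (k : ℕ) < m then x k else 0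

lemma sum_single_nat {n : ℕ} (x : Fin n → ℚ) {m : ℕ} (h : m < n) :
    (∑ k : Fin n, if (k : ℕ) = m then x k else 0) = x ⟨m, h⟩ := by
  rw [Finset.sum_eq_single (⟨m, h⟩ : Fin n)]
  · simp
  · intro b _ hb
    rw [if_neg (fun hc => hb (Fin.ext hc))]
  · simp

lemma psum_succ {n : ℕ} (x : Fin n → ℚ) {m : ℕ} (h : m < n) :
    psum n x (m + 1) = psum n x m + x ⟨m, h⟩ := by
  rw [psum, psum, ← sum_single_nat x h, ← Finset.sum_add_distrib]
  apply Finset.sum_congr rfl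
  intro k _
  rcases lt_trichotomy (k : ℕ) m with hk | hk | hk
  · rw [if_pos (by omega), if_pos hk, if_neg (by omega), add_zero]
  · rw [if_pos (by omega), if_neg (by omega), if_pos hk, zero_add]
  · rw [if_neg (by omega), if_neg (by omega), if_neg (by omega), add_zero]

lemma psum_sub {n : ℕ} (x y : Fin n → ℚ) (m : ℕ) :
    psum n (x - y) m = psum n x m - psum n y m := by
  rw [psum, psum, psum, ← Finset.sum_sub_distrib]
  apply Finset.sum_congr rfl
  intro k _
  by_cases h : (k : ℕ) < m <;> simp [h]

lemma psum_stde {n i : ℕ} (h : i < n) (m : ℕ) :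
    psum n (stde n i) m = if i < m then 1 else 0 := by
  rw [psum]
  have hterm : ∀ k : Fin n, (if (k : ℕ) < m then stde n i k else 0)
      = (if (k : ℕ) = i then (if i < m then (1 : ℚ) else 0) else 0) := by
    intro k
    by_cases hk : (k : ℕ) = i
    · simp [stde, hk]
    · simp [stde, hk]
  rw [Finset.sum_congr rfl (fun k _ => hterm k), sum_single_nat _ h]

lemma psum_root {n i : ℕ} (hi : i + 1 < n) (m : ℕ) :
    psum n (simpleRoot n i) m
      = (if i < m then 1 else 0) - (if i + 1 < m then 1 else 0) := by
  rw [simpleRoot, psum_sub, psum_stde (by omega) m, psum_stde hi m]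

/-- From `rootLE v (f•θ)` get the partial-sum inequalities. -/
lemma psum_of_rootLE {n f : ℕ} {v : Fin n → ℚ} (h : rootLE n v ((f : ℚ) • theta n)) :
    (∀ m : ℕ, psum n v m ≤ psum n ((f : ℚ) • theta n) m) ∧
      psum n v n = psum n ((f : ℚ) • theta n) n := by
  obtain ⟨c, hc, heq⟩ := h
  have key : ∀ m : ℕ, psum n ((f : ℚ) • theta n) m - psum n v m
      = ∑ i ∈ Finset.range (n - 1),
          c i * ((if i < m then 1 else 0) - (if i + 1 < m then 1 else 0)) := by
    intro m
    rw [← psum_sub, heq, psum]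
    have hterm : ∀ k : Fin n,
        (if (k : ℕ) < m then (∑ i ∈ Finset.range (n - 1), c i • simpleRoot n i) k else 0)
        = ∑ i ∈ Finset.range (n - 1), (if (k : ℕ) < m then c i * simpleRoot n i k else 0) := by
      intro k
      rw [Finset.sum_apply]
      by_cases hk : (k : ℕ) < m
      · simp only [if_pos hk]; rfl
      · simp only [if_neg hk, Finset.sum_const_zero]
    rw [Finset.sum_congr rfl (fun k _ => hterm k), Finset.sum_comm]
    apply Finset.sum_congr rfl
    intro i hi
    have hi' : i + 1 < n := by have := Finset.mem_range.mp hi; omega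
    rw [← psum_root hi' m, psum, Finset.mul_sum]
    apply Finset.sum_congr rfl
    intro k _
    by_cases hk : (k : ℕ) < m <;> simp [hk]
  constructor
  · intro m
    have h0 : 0 ≤ ∑ i ∈ Finset.range (n - 1),
        c i * ((if i < m then 1 else 0) - (if i + 1 < m then 1 else 0)) := by
      apply Finset.sum_nonneg
      intro i _
      apply mul_nonneg (hc i)
      by_cases h2 : i + 1 < m
      · rw [if_pos (by omega), if_pos h2]; norm_num
      · rw [if_neg h2]
        by_cases h3 : i < m <;> simp [h3]
    have := key m
    linarith
  · have h0 : ∑ i ∈ Finset.range (n - 1),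
        c i * ((if i < n then 1 else 0) - (if i + 1 < n then 1 else 0)) = 0 := by
      apply Finset.sum_eq_zero
      intro i hi
      have := Finset.mem_range.mp hi
      rw [if_pos (by omega), if_pos (by omega)]
      ring
    have := key n
    linarith


lemma psum_avg {n f : ℕ} (D : Finset ℕ) {lam : Fin n → ℤ} (hlam : SatisfiesHf n f lam)
    (u : Equiv.Perm (Fin n)) :
    (∀ m : ℕ, psum n (permAct n u (avg n D (ratVec n lam))) m
        ≤ psum n ((f : ℚ) • theta n) m) ∧
      psum n (permAct n u (avg n D (ratVec n lam))) n = psum n ((f : ℚ) • theta n) n := by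
  classical
  set lamq := ratVec n lam with hlamq
  set ν := permAct n u (avg n D lamq) with hν
  have hfin : ((WD n D : Set (Equiv.Perm (Fin n)))).Finite := Set.toFinite _
  set t : Finset (Equiv.Perm (Fin n)) := hfin.toFinset with ht
  set N : ℕ := Nat.card ↥(WD n D) with hN
  have hcard : N = t.card := by
    have h1 : Nat.card ↥(WD n D) = Nat.card (↑(WD n D) : Set (Equiv.Perm (Fin n))) := rfl
    rw [hN, h1, Nat.card_coe_set_eq, Set.ncard_eq_toFinset_card _ hfin]
  have hNpos : 0 < N := Nat.card_pos
  have hνk : ∀ k, ν k = (N : ℚ)⁻¹ * ∑ σ ∈ t, permAct n (u * σ) lamq k := by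
    intro k
    rw [hν]
    show (avg n D lamq) (u⁻¹ k) = _
    rw [avg, Pi.smul_apply, smul_eq_mul]
    congr 1
    rw [show WDsum n D lamq = ∑ σ ∈ t, permAct n σ lamq from
      finsum_mem_eq_finite_toFinset_sum _ hfin, Finset.sum_apply]
    apply Finset.sum_congr rfl
    intro σ _
    simp [permAct, mul_inv_rev]
  have hpsum : ∀ m : ℕ, psum n ν m = (N : ℚ)⁻¹ * ∑ σ ∈ t, psum n (permAct n (u * σ) lamq) m := by
    intro m
    rw [psum]
    calc (∑ k : Fin n, if (k : ℕ) < m then ν k else 0)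
        = ∑ k : Fin n, ∑ σ ∈ t,
            (N : ℚ)⁻¹ * (if (k : ℕ) < m then permAct n (u * σ) lamq k else 0) := by
          apply Finset.sum_congr rfl
          intro k _
          by_cases h : (k : ℕ) < m
          · rw [if_pos h, hνk k, Finset.mul_sum]
            apply Finset.sum_congr rfl
            intro σ _
            rw [if_pos h]
          · rw [if_neg h]
            symm
            apply Finset.sum_eq_zero
            intro σ _
            rw [if_neg h, mul_zero]
      _ = ∑ σ ∈ t, (N : ℚ)⁻¹ * psum n (permAct n (u * σ) lamq) m := by
          rw [Finset.sum_comm]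
          apply Finset.sum_congr rfl
          intro σ _
          rw [psum, Finset.mul_sum]
      _ = (N : ℚ)⁻¹ * ∑ σ ∈ t, psum n (permAct n (u * σ) lamq) m := by
          rw [Finset.mul_sum]
  have hNQ : (0 : ℚ) < (N : ℚ) := by exact_mod_cast hNpos
  constructor
  · intro m
    rw [hpsum m]
    have hle : ∑ σ ∈ t, psum n (permAct n (u * σ) lamq) m
        ≤ ∑ σ ∈ t, psum n ((f : ℚ) • theta n) m :=
      Finset.sum_le_sum fun σ _ => (psum_of_rootLE (hlam (u * σ))).1 m
    calc (N : ℚ)⁻¹ * ∑ σ ∈ t, psum n (permAct n (u * σ) lamq) m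
        ≤ (N : ℚ)⁻¹ * ∑ σ ∈ t, psum n ((f : ℚ) • theta n) m :=
          mul_le_mul_of_nonneg_left hle (by positivity)
      _ = psum n ((f : ℚ) • theta n) m := by
          rw [Finset.sum_const, ← hcard, nsmul_eq_mul, ← mul_assoc,
            inv_mul_cancel₀ (ne_of_gt hNQ), one_mul]
  · rw [hpsum n]
    have heq : ∑ σ ∈ t, psum n (permAct n (u * σ) lamq) n
        = ∑ σ ∈ t, psum n ((f : ℚ) • theta n) n :=
      Finset.sum_congr rfl fun σ _ => (psum_of_rootLE (hlam (u * σ))).2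
    rw [heq, Finset.sum_const, ← hcard, nsmul_eq_mul, ← mul_assoc,
      inv_mul_cancel₀ (ne_of_gt hNQ), one_mul]

/-- Lemma `single`, §2.2, for `G = GL_n`.  If `w` is `D`-admissible with
`w·λ'_D` dominant and `supp (fθ − w·λ'_D) ⊆ w(D)`, then `w` is the unique `D`-admissible
permutation `w'` with `w'·λ'_D` dominant. -/
theorem statement6 (n f : ℕ) (hn : 2 ≤ n) (hf : 1 ≤ f) (D : Finset ℕ)
    (hD : D ⊆ Finset.range (n - 1)) (lam : Fin n → ℤ) (hlam : SatisfiesHf n f lam)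
    (w : Equiv.Perm (Fin n)) (hw : IsAdmissible n D w)
    (hdom : Dominant n (permAct n w (avg n D (ratVec n lam))))
    (hsupp : suppOf n ((f : ℚ) • theta n - permAct n w (avg n D (ratVec n lam)))
      ⊆ permImage n w D) :
    ∀ w' : Equiv.Perm (Fin n), IsAdmissible n D w' →
      Dominant n (permAct n w' (avg n D (ratVec n lam))) → w' = w := by
  intro w' hw' hdom'
  classical
  set μ : Fin n → ℚ := avg n D (ratVec n lam) with hμ
  set ν : Fin n → ℚ := permAct n w μ with hνdef
  set ν' : Fin n → ℚ := permAct n w' μ with hν'def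
  set g : Fin n → ℚ := (f : ℚ) • theta n with hg
  -- partial sum inequalities for ν
  have hP := psum_avg D hlam w
  have hPle : ∀ m : ℕ, psum n ν m ≤ psum n g m := hP.1
  have hPn : psum n ν n = psum n g n := hP.2
  -- (C): equal consecutive entries of ν lie in w(D)
  have hadj : ∀ m : ℕ, ∀ h1 : m + 1 < n,
      ν ⟨m, Nat.lt_of_succ_lt h1⟩ = ν ⟨m + 1, h1⟩ → m ∈ permImage n w D := by
    intro m h1 heqv
    apply hsupp
    rw [suppOf, Finset.mem_filter]
    refine ⟨Finset.mem_range.mpr (by omega), ?_⟩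
    have hrw : (∑ k : Fin n, if (k : ℕ) ≤ m then (g - ν) k else 0)
        = psum n (g - ν) (m + 1) := by
      apply Finset.sum_congr rfl
      intro k _
      congr 1
      simp [Nat.lt_succ_iff]
    rw [hrw, psum_sub]
    intro hzero
    have hm : m < n := Nat.lt_of_succ_lt h1
    have e1 := psum_succ g hm
    have e1' := psum_succ ν hm
    have e2 := psum_succ g h1
    have e2' := psum_succ ν h1
    have a0 := hPle m
    have a2 : psum n ν (m + 1 + 1) ≤ psum n g (m + 1 + 1) := hPle (m + 2)
    have hgm : g ⟨m, hm⟩ = (f : ℚ) * ((n : ℚ) - 1 - (m : ℚ)) := by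
      simp [hg, theta]
    have hgm1 : g ⟨m + 1, h1⟩ = (f : ℚ) * ((n : ℚ) - 1 - ((m : ℚ) + 1)) := by
      simp [hg, theta]
    have hfQ : (1 : ℚ) ≤ (f : ℚ) := by exact_mod_cast hf
    rw [hgm] at e1
    rw [hgm1] at e2
    rw [heqv] at e1'
    nlinarith [e1, e1', e2, e2', a0, a2, hzero]
  -- key: equal consecutive entries give an adjacent pair coming from D
  have hkey : ∀ m : ℕ, ∀ h1 : m + 1 < n,
      ν ⟨m, Nat.lt_of_succ_lt h1⟩ = ν ⟨m + 1, h1⟩ →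
      ∃ d, d ∈ D ∧ ∃ hd : d + 1 < n,
        w ⟨d, Nat.lt_of_succ_lt hd⟩ = ⟨m, Nat.lt_of_succ_lt h1⟩ ∧
        w ⟨d + 1, hd⟩ = ⟨m + 1, h1⟩ := by
    intro m h1 hv
    have hm := hadj m h1 hv
    rw [permImage, Finset.mem_image] at hm
    obtain ⟨d, hdD, hdm⟩ := hm
    have hdlt : d < n - 1 := Finset.mem_range.mp (hD hdD)
    have hdn : d < n := by omega
    rw [dif_pos hdn] at hdm
    have hd1 : d + 1 < n := by omega
    have hadm := hw d hdD hd1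
    exact ⟨d, hdD, hd1, Fin.ext hdm, Fin.ext (by rw [hadm, hdm])⟩
  -- (A): ν' = ν
  have hνeq : ν' = ν := by
    have hmono : ∀ (u : Equiv.Perm (Fin n)), Dominant n (permAct n u μ) →
        Monotone ((fun k => OrderDual.toDual (μ k)) ∘ ⇑(u⁻¹)) := by
      intro u hd i j hij
      exact hd i j hij
    have := Tuple.unique_monotone (n := n) (f := fun k => OrderDual.toDual (μ k))
      (hmono w' hdom') (hmono w hdom)
    funext k
    have hk := congrFun this k
    exact OrderDual.toDual.injective hk
  -- strong induction: j ≤ w' (w⁻¹ j)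
  have hinv : ∀ j : ℕ, ∀ hj : j < n, j ≤ ((w' (w⁻¹ ⟨j, hj⟩) : Fin n) : ℕ) := by
    intro j
    induction j using Nat.strong_induction_on with
    | _ j IH =>
      intro hj
      by_contra hlt
      push_neg at hlt
      set j' : Fin n := w' (w⁻¹ ⟨j, hj⟩) with hj'def
      have hj0 : 1 ≤ j := by omega
      have hv1 : ν' j' = μ (w⁻¹ ⟨j, hj⟩) := by
        rw [hν'def]
        show μ (w'⁻¹ (w' _)) = _
        rw [Equiv.Perm.inv_def, Equiv.symm_apply_apply]
      have hvj : ν j' = ν ⟨j, hj⟩ := by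
        rw [hνeq] at hv1
        rw [hv1]
        rfl
      have hj1 : j - 1 < n := by omega
      have ha : ν ⟨j - 1, hj1⟩ ≤ ν j' := hdom j' ⟨j - 1, hj1⟩ (by
        show (j' : ℕ) ≤ j - 1; omega)
      have hb : ν ⟨j, hj⟩ ≤ ν ⟨j - 1, hj1⟩ := hdom ⟨j - 1, hj1⟩ ⟨j, hj⟩ (by
        show j - 1 ≤ j; omega)
      have hcc : ν ⟨j - 1, hj1⟩ = ν ⟨j, hj⟩ := le_antisymm (hvj ▸ ha) hb
      have hm1 : (j - 1) + 1 < n := by omega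
      have hfe : ((⟨(j - 1) + 1, hm1⟩ : Fin n)) = ⟨j, hj⟩ := Fin.ext (by show (j - 1) + 1 = j; omega)
      obtain ⟨d, hdD, hd1, hwd, hwd1⟩ := hkey (j - 1) hm1 (by rw [hfe]; exact hcc)
      rw [hfe] at hwd1
      have hwinv : w⁻¹ ⟨j, hj⟩ = ⟨d + 1, hd1⟩ := by
        rw [← hwd1, Equiv.Perm.inv_def, Equiv.symm_apply_apply]
      have hwinv' : w⁻¹ ⟨j - 1, hj1⟩ = ⟨d, Nat.lt_of_succ_lt hd1⟩ := by
        rw [← hwd, Equiv.Perm.inv_def, Equiv.symm_apply_apply]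
      have hIH := IH (j - 1) (by omega) hj1
      rw [hwinv'] at hIH
      have hadm' := hw' d hdD hd1
      have hj'val : (j' : ℕ) = ((w' ⟨d + 1, hd1⟩ : Fin n) : ℕ) := by
        rw [hj'def, hwinv]
      omega
  have hgei : ∀ k : Fin n, (k : ℕ) ≤ ((w' (w⁻¹ k) : Fin n) : ℕ) := by
    intro k
    have := hinv (k : ℕ) k.isLt
    simpa using this
  have hsum2 : ∑ k : Fin n, ((w' (w⁻¹ k) : Fin n) : ℕ) = ∑ k : Fin n, (k : ℕ) := by
    exact Equiv.sum_comp ((w⁻¹ : Equiv.Perm (Fin n)).trans w') (fun k : Fin n => (k : ℕ))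
  have hall := (Finset.sum_eq_sum_iff_of_le (fun k _ => hgei k)).mp hsum2.symm
  apply Equiv.ext
  intro i
  have h := hall (w i) (Finset.mem_univ _)
  rw [Equiv.Perm.inv_def, Equiv.symm_apply_apply] at h
  exact Fin.ext h.symm


end BHHMS
end
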